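/- Let v̂ : Δ(Ω) × S → ℝ be such that μ ↦ v̂(μ, s) is concave on Δ(Ω) for every s ∈ S. Then for every μ ∈ Δ(Ω), V^jo(μ) = V^co(μ), where V^jo(μ) = sup{z : (μ, z) ∈ join((v̂_s)_{s∈S})} and V^co(μ) = sup{z : (μ, z) ∈ convexHull(⋃_{s∈S} v̂_s)}; in particular the join envelope V^jo is concave on Δ(Ω). -/

import Mathlib

open scoped BigOperators

noncomputable section

/-- The (topological) join of a finite family of subsets of a real vector space:
all convex combinations using at most one point from each set. -/
def joinFam {E : Type*} [AddCommMonoid E] [Module ℝ E] {ι : Type*} [Fintype ι]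
    (X : ι → Set E) : Set E :=
  {p | ∃ (lam : ι → ℝ) (x : ι → E), (∀ i, 0 ≤ lam i) ∧ (∑ i, lam i) = 1 ∧
    (∀ i, x i ∈ X i) ∧ p = ∑ i, lam i • x i}

/-- The interim payoff graph of action `s`: `{(μ, v̂(μ, s)) : μ ∈ Δ(Ω)}`. -/
def payoffGraph {Ω S : Type*} [Fintype Ω] (vhat : (Ω → ℝ) → S → ℝ) (s : S) :
    Set ((Ω → ℝ) × ℝ) :=
  {q | ∃ μ ∈ stdSimplex ℝ Ω, q = (μ, vhat μ s)}

/-- The join envelope of the interim payoff graphs. -/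
def Vjo {Ω S : Type*} [Fintype Ω] [Fintype S] (vhat : (Ω → ℝ) → S → ℝ)
    (μ : Ω → ℝ) : ℝ :=
  sSup {z : ℝ | ((μ, z) : (Ω → ℝ) × ℝ) ∈ joinFam (payoffGraph vhat)}

/-- The concave envelope of the interim payoff graphs. -/
def Vco {Ω S : Type*} [Fintype Ω] [Fintype S] (vhat : (Ω → ℝ) → S → ℝ)
    (μ : Ω → ℝ) : ℝ :=
  sSup {z : ℝ |
    ((μ, z) : (Ω → ℝ) × ℝ) ∈ convexHull ℝ (⋃ s : S, payoffGraph vhat s)}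

lemma uniform_mem_stdSimplex (Ω : Type*) [Fintype Ω] [Nonempty Ω] :
    (fun _ => 1 / (Fintype.card Ω : ℝ)) ∈ stdSimplex ℝ Ω := by
  have hc : 0 < (Fintype.card Ω : ℝ) := by
    exact_mod_cast Fintype.card_pos
  constructor
  · intro i; positivity
  · simp [Finset.sum_const, Finset.card_univ]

lemma stdSimplex_rep {Ω : Type*} [Fintype Ω] [DecidableEq Ω] {x : Ω → ℝ} (hx : x ∈ stdSimplex ℝ Ω) :
    x = ∑ i : Ω, x i • (Pi.single i 1 : Ω → ℝ) := by
  funext j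
  simp [Finset.sum_apply, Pi.single_apply, Finset.sum_ite_eq]

lemma concave_lower_bound {Ω : Type*} [Fintype Ω] [DecidableEq Ω] [Nonempty Ω] {f : (Ω → ℝ) → ℝ}
    (hf : ConcaveOn ℝ (stdSimplex ℝ Ω) f) :
    ∃ m, ∀ x ∈ stdSimplex ℝ Ω, m ≤ f x := by
  refine ⟨Finset.univ.inf' Finset.univ_nonempty (fun i => f (Pi.single i 1)), fun x hx => ?_⟩
  have h1 : ∑ i : Ω, x i • f (Pi.single i 1) ≤ f (∑ i : Ω, x i • (Pi.single i 1 : Ω → ℝ)) :=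
    hf.le_map_sum (fun i _ => hx.1 i) hx.2 (fun i _ => single_mem_stdSimplex ℝ i)
  rw [← stdSimplex_rep hx] at h1
  refine le_trans ?_ h1
  calc Finset.univ.inf' Finset.univ_nonempty (fun i => f (Pi.single i 1))
      = ∑ i : Ω, x i • Finset.univ.inf' Finset.univ_nonempty (fun i => f (Pi.single i 1)) := by
        rw [← Finset.sum_smul, hx.2, one_smul]
    _ ≤ ∑ i : Ω, x i • f (Pi.single i 1) := by
        refine Finset.sum_le_sum fun i _ => ?_
        have := Finset.inf'_le (fun i => f (Pi.single i 1)) (Finset.mem_univ i)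
        exact smul_le_smul_of_nonneg_left this (hx.1 i)

lemma concave_upper_bound {Ω : Type*} [Fintype Ω] [Nonempty Ω] {f : (Ω → ℝ) → ℝ}
    (hf : ConcaveOn ℝ (stdSimplex ℝ Ω) f) :
    ∃ M, ∀ x ∈ stdSimplex ℝ Ω, f x ≤ M := by
  classical
  obtain ⟨m, hm⟩ := concave_lower_bound hf
  have hc : 0 < (Fintype.card Ω : ℝ) := by exact_mod_cast Fintype.card_pos
  set n : ℝ := (Fintype.card Ω : ℝ) with hn
  set ε : ℝ := 1 / (2 * n) with hε
  have hε0 : 0 < ε := by positivity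
  have h1n : (1:ℝ) ≤ n := by rw [hn]; exact_mod_cast Fintype.card_pos
  have hεn : ε ≤ 1 / n := by
    rw [div_le_div_iff₀ (by positivity) hc]; nlinarith
  have hε1 : ε < 1 := by
    rw [hε, div_lt_one (by positivity)]; nlinarith
  classical
  set p : Ω → ℝ := fun _ => 1 / n with hp
  have hpmem : p ∈ stdSimplex ℝ Ω := uniform_mem_stdSimplex Ω
  refine ⟨(f p - (1 - ε) * m) / ε, fun x hx => ?_⟩
  set y : Ω → ℝ := fun i => (p i - ε * x i) / (1 - ε) with hy
  have hymem : y ∈ stdSimplex ℝ Ω := by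
    constructor
    · intro i
      have hx1 : x i ≤ 1 := (mem_Icc_of_mem_stdSimplex hx i).2
      have : ε * x i ≤ 1 / n := by
        calc ε * x i ≤ ε * 1 := by nlinarith
          _ ≤ 1 / n := by rw [mul_one]; exact hεn
      exact div_nonneg (by show (0:ℝ) ≤ 1/n - ε * x i; linarith) (by linarith)
    · rw [← Finset.sum_div]
      have : ∑ i : Ω, (p i - ε * x i) = 1 - ε := by
        rw [Finset.sum_sub_distrib, ← Finset.mul_sum, hx.2, hpmem.2, mul_one]
      rw [this, div_self (by linarith)]
  have hcomb : ε • x + (1 - ε) • y = p := by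
    funext i
    have h1ε : (1:ℝ) - ε ≠ 0 := by linarith
    simp only [Pi.add_apply, Pi.smul_apply, smul_eq_mul, hy]
    field_simp
    ring
  have hj := hf.2 hx hymem hε0.le (by linarith : (0:ℝ) ≤ 1 - ε) (by ring)
  rw [hcomb] at hj
  have hmy := hm y hymem
  rw [le_div_iff₀ hε0]
  simp only [smul_eq_mul] at hj
  nlinarith

lemma merge_lemma {Ω S : Type*} [Fintype Ω] [Nonempty Ω] [Fintype S] [Nonempty S]
    (vhat : (Ω → ℝ) → S → ℝ)
    (hconc : ∀ s : S, ConcaveOn ℝ (stdSimplex ℝ Ω) (fun μ => vhat μ s))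
    {μ : Ω → ℝ} {z : ℝ}
    (hq : ((μ, z) : (Ω → ℝ) × ℝ) ∈ convexHull ℝ (⋃ s : S, payoffGraph vhat s)) :
    ∃ z', z ≤ z' ∧ ((μ, z') : (Ω → ℝ) × ℝ) ∈ joinFam (payoffGraph vhat) := by
  classical
  rw [convexHull_eq] at hq
  obtain ⟨ι, t, w, q, hw0, hw1, hqmem, hcm⟩ := hq
  rw [Finset.centerMass_eq_of_sum_1 _ _ hw1] at hcm
  have hch : ∀ i : t, ∃ s : S, ∃ ν ∈ stdSimplex ℝ Ω, q (i : ι) = (ν, vhat ν s) := by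
    intro i
    have h := hqmem i i.2
    rw [Set.mem_iUnion] at h
    obtain ⟨s, ν, hν, hq'⟩ := h
    exact ⟨s, ν, hν, hq'⟩
  choose σ νf hνf hqf using hch
  have hw0' : ∀ i : t, 0 ≤ w i := fun i => hw0 i i.2
  set lam : S → ℝ := fun s => ∑ i : t, if σ i = s then w (i : ι) else 0 with hlamdef
  have hlam0 : ∀ s, 0 ≤ lam s := fun s =>
    Finset.sum_nonneg fun i _ => by by_cases h : σ i = s <;> simp [h, hw0' i]
  have hw1' : ∑ i : t, w (i : ι) = 1 := by rw [Finset.sum_coe_sort t w]; exact hw1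
  have hlamsum : ∑ s, lam s = 1 := by
    rw [hlamdef, Finset.sum_comm]
    simp only [Finset.sum_ite_eq, Finset.mem_univ, if_pos]
    exact hw1'
  have hzero : ∀ s, lam s = 0 → ∀ i : t, σ i = s → w (i : ι) = 0 := by
    intro s hs i hi
    have h := (Finset.sum_eq_zero_iff_of_nonneg
      (fun i _ => by by_cases h : σ i = s <;> simp [h, hw0' i])).mp hs i (Finset.mem_univ i)
    simpa [hi] using h
  set ν : S → (Ω → ℝ) := fun s =>
    if lam s = 0 then (fun _ => 1 / (Fintype.card Ω : ℝ))
    else (lam s)⁻¹ • ∑ i : t, (if σ i = s then w (i : ι) else 0) • νf i with hνdef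
  have hsmul : ∀ s, lam s • ν s = ∑ i : t, (if σ i = s then w (i : ι) else 0) • νf i := by
    intro s
    by_cases h : lam s = 0
    · rw [hνdef]
      simp only [h, if_pos rfl, zero_smul]
      symm
      refine Finset.sum_eq_zero fun i _ => ?_
      by_cases hi : σ i = s
      · simp [hi, hzero s h i hi]
      · simp [hi]
    · simp only [hνdef, if_neg h]
      rw [smul_smul, mul_inv_cancel₀ h, one_smul]
  have hν_eq : ∀ s, lam s ≠ 0 →
      ∑ i : t, ((if σ i = s then w (i : ι) else 0) / lam s) • νf i = ν s := by
    intro s h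
    simp only [hνdef, if_neg h, Finset.smul_sum]
    refine Finset.sum_congr rfl fun i _ => ?_
    rw [smul_smul, div_eq_inv_mul]
  have hwsum : ∀ s, lam s ≠ 0 →
      ∑ i : t, (if σ i = s then w (i : ι) else 0) / lam s = 1 := by
    intro s h
    rw [← Finset.sum_div]
    show lam s / lam s = 1
    exact div_self h
  have hνmem : ∀ s, ν s ∈ stdSimplex ℝ Ω := by
    intro s
    by_cases h : lam s = 0
    · simp only [hνdef, if_pos h]
      exact uniform_mem_stdSimplex Ω
    · rw [← hν_eq s h]
      refine (convex_stdSimplex ℝ Ω).sum_mem (fun i _ => ?_) (hwsum s h) (fun i _ => hνf i)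
      refine div_nonneg ?_ (hlam0 s)
      by_cases hi : σ i = s <;> simp [hi, hw0' i]
  rw [← Finset.sum_coe_sort t (fun i => w i • q i)] at hcm
  rw [Finset.sum_congr rfl (fun (i : t) _ => by rw [hqf i])] at hcm
  rw [Prod.ext_iff] at hcm
  simp only [Prod.smul_mk, Prod.fst_sum, Prod.snd_sum, smul_eq_mul] at hcm
  obtain ⟨hμ1, hz1⟩ := hcm
  refine ⟨∑ s, lam s * vhat (ν s) s, ?_, ?_⟩
  · rw [← hz1]
    have hswap : ∑ i : t, w (i : ι) * vhat (νf i) (σ i)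
        = ∑ s, ∑ i : t, (if σ i = s then w (i : ι) * vhat (νf i) s else 0) := by
      rw [Finset.sum_comm]
      refine Finset.sum_congr rfl fun i _ => ?_
      simp [Finset.sum_ite_eq]
    rw [hswap]
    refine Finset.sum_le_sum fun s _ => ?_
    by_cases h : lam s = 0
    · have hterm : ∀ i : t, (if σ i = s then w (i : ι) * vhat (νf i) s else 0) = 0 := by
        intro i
        by_cases hi : σ i = s
        · simp [hi, hzero s h i hi]
        · simp [hi]
      rw [Finset.sum_congr rfl (fun i _ => hterm i), h]
      simp
    · have hj := (hconc s).le_map_sum (t := (Finset.univ : Finset t))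
        (w := fun i : t => (if σ i = s then w (i : ι) else 0) / lam s)
        (p := fun i : t => νf i)
        (fun i _ => div_nonneg (by by_cases hi : σ i = s <;> simp [hi, hw0' i]) (hlam0 s))
        (hwsum s h) (fun i _ => hνf i)
      rw [hν_eq s h] at hj
      have hfinal : ∑ i : t, (if σ i = s then w (i : ι) * vhat (νf i) s else 0)
          = lam s * ∑ i : t, ((if σ i = s then w (i : ι) else 0) / lam s) • vhat (νf i) s := by
        simp only [smul_eq_mul]
        rw [Finset.mul_sum]
        refine Finset.sum_congr rfl fun i _ => ?_
        by_cases hi : σ i = s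
        · simp only [hi, if_pos rfl, smul_eq_mul]
          field_simp
          simp only [↓reduceIte]
          ring
        · simp [hi]
      rw [hfinal]
      exact mul_le_mul_of_nonneg_left hj (hlam0 s)
  · refine ⟨lam, fun s => (ν s, vhat (ν s) s), hlam0, hlamsum,
      fun s => ⟨ν s, hνmem s, rfl⟩, ?_⟩
    rw [Prod.ext_iff]
    simp only [Prod.smul_mk, Prod.fst_sum, Prod.snd_sum, smul_eq_mul]
    refine ⟨?_, trivial⟩
    have hfst : ∑ s, lam s • ν s = ∑ i : t, w (i : ι) • νf i := by
      rw [Finset.sum_congr rfl (fun s _ => hsmul s), Finset.sum_comm]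
      refine Finset.sum_congr rfl fun i _ => ?_
      simp [ite_smul, Finset.sum_ite_eq]
    rw [hfst, hμ1]

/-- If each interim payoff function `μ ↦ v̂(μ, s)` is concave on
`Δ(Ω)`, then the join envelope equals the concave envelope on `Δ(Ω)`; in particular
the join envelope is concave on `Δ(Ω)`. -/
theorem join_envelope_concave_of_concave_interim_payoffs
    {Ω S : Type*} [Fintype Ω] [Nonempty Ω] [Fintype S] [Nonempty S]
    (vhat : (Ω → ℝ) → S → ℝ)
    (hconc : ∀ s : S, ConcaveOn ℝ (stdSimplex ℝ Ω) (fun μ => vhat μ s)) :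
    (∀ μ ∈ stdSimplex ℝ Ω, Vjo vhat μ = Vco vhat μ) ∧
      ConcaveOn ℝ (stdSimplex ℝ Ω) (Vjo vhat) := by
  classical
  set A : (Ω → ℝ) → Set ℝ :=
    fun μ => {z : ℝ | ((μ, z) : (Ω → ℝ) × ℝ) ∈ joinFam (payoffGraph vhat)} with hA
  set B : (Ω → ℝ) → Set ℝ :=
    fun μ => {z : ℝ |
      ((μ, z) : (Ω → ℝ) × ℝ) ∈ convexHull ℝ (⋃ s : S, payoffGraph vhat s)} with hB
  have hVjo : ∀ μ, Vjo vhat μ = sSup (A μ) := fun μ => rfl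
  have hVco : ∀ μ, Vco vhat μ = sSup (B μ) := fun μ => rfl
  have hMs : ∀ s : S, ∃ M, ∀ x ∈ stdSimplex ℝ Ω, vhat x s ≤ M :=
    fun s => concave_upper_bound (hconc s)
  choose Ms hMs using hMs
  obtain ⟨M, hM⟩ : ∃ M, ∀ s, Ms s ≤ M :=
    ⟨Finset.univ.sup' Finset.univ_nonempty Ms,
      fun s => Finset.le_sup' Ms (Finset.mem_univ s)⟩
  have hhull : ∀ q ∈ convexHull ℝ (⋃ s : S, payoffGraph vhat s),
      Prod.snd q ≤ M := by
    intro q hq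
    have hsub : (⋃ s : S, payoffGraph vhat s) ⊆ {q : (Ω → ℝ) × ℝ | q.2 ≤ M} := by
      rintro q hq
      rw [Set.mem_iUnion] at hq
      obtain ⟨s, ν, hν, rfl⟩ := hq
      exact le_trans (hMs s ν hν) (hM s)
    have hcvx : Convex ℝ {q : (Ω → ℝ) × ℝ | q.2 ≤ M} := by
      intro q1 h1 q2 h2 a b ha hb hab
      simp only [Set.mem_setOf_eq] at *
      have h : (a • q1 + b • q2).2 = a * q1.2 + b * q2.2 := rfl
      rw [h]
      calc a * q1.2 + b * q2.2 ≤ a * M + b * M :=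
            add_le_add (mul_le_mul_of_nonneg_left h1 ha) (mul_le_mul_of_nonneg_left h2 hb)
        _ = M := by rw [← add_mul, hab, one_mul]
    exact convexHull_min hsub hcvx hq
  have hBbdd : ∀ μ, BddAbove (B μ) := fun μ => ⟨M, fun z hz => hhull _ hz⟩
  have hAB : ∀ μ, A μ ⊆ B μ := by
    intro μ z hz
    obtain ⟨lam, x, h0, h1, hmem, hp⟩ := hz
    show ((μ, z) : (Ω → ℝ) × ℝ) ∈ convexHull ℝ (⋃ s : S, payoffGraph vhat s)
    rw [hp]
    exact (convex_convexHull ℝ _).sum_mem (fun i _ => h0 i) (by simpa using h1)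
      (fun i _ => subset_convexHull ℝ _ (Set.mem_iUnion.mpr ⟨i, hmem i⟩))
  have hAbdd : ∀ μ, BddAbove (A μ) := fun μ => ⟨M, fun z hz => hhull _ (hAB μ hz)⟩
  have hAne : ∀ μ ∈ stdSimplex ℝ Ω, (A μ).Nonempty := by
    intro μ hμ
    obtain ⟨s₀⟩ := ‹Nonempty S›
    refine ⟨vhat μ s₀, fun s => if s = s₀ then 1 else 0, fun s => (μ, vhat μ s),
      ?_, ?_, fun s => ⟨μ, hμ, rfl⟩, ?_⟩
    · intro s; by_cases h : s = s₀ <;> simp [h]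
    · simp [Finset.sum_ite_eq']
    · simp [ite_smul, Finset.sum_ite_eq']
  have heq : ∀ μ ∈ stdSimplex ℝ Ω, Vjo vhat μ = Vco vhat μ := by
    intro μ hμ
    rw [hVjo, hVco]
    apply le_antisymm
    · exact csSup_le_csSup (hBbdd μ) (hAne μ hμ) (hAB μ)
    · refine csSup_le ((hAne μ hμ).mono (hAB μ)) fun z hz => ?_
      obtain ⟨z', hle, hmem⟩ := merge_lemma vhat hconc hz
      exact hle.trans (le_csSup (hAbdd μ) hmem)
  refine ⟨heq, ⟨convex_stdSimplex ℝ Ω, ?_⟩⟩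
  intro μ₁ h₁ μ₂ h₂ a b ha hb hab
  simp only [smul_eq_mul]
  have hμc : a • μ₁ + b • μ₂ ∈ stdSimplex ℝ Ω := (convex_stdSimplex ℝ Ω) h₁ h₂ ha hb hab
  rcases eq_or_lt_of_le ha with rfl | ha'
  · have hb1 : b = 1 := by linarith
    subst hb1; simp
  rcases eq_or_lt_of_le hb with rfl | hb'
  · have ha1 : a = 1 := by linarith
    subst ha1; simp
  have key : ∀ z₁ ∈ A μ₁, ∀ z₂ ∈ A μ₂,
      a * z₁ + b * z₂ ≤ Vjo vhat (a • μ₁ + b • μ₂) := by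
    intro z₁ hz₁ z₂ hz₂
    rw [heq _ hμc, hVco]
    refine le_csSup (hBbdd _) ?_
    show ((a • μ₁ + b • μ₂, a * z₁ + b * z₂) : (Ω → ℝ) × ℝ) ∈
      convexHull ℝ (⋃ s : S, payoffGraph vhat s)
    have hc := (convex_convexHull ℝ (⋃ s : S, payoffGraph vhat s))
      (hAB μ₁ hz₁) (hAB μ₂ hz₂) ha hb hab
    exact hc
  have h2 : ∀ z₁ ∈ A μ₁,
      Vjo vhat μ₂ ≤ (Vjo vhat (a • μ₁ + b • μ₂) - a * z₁) / b := by
    intro z₁ hz₁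
    rw [hVjo]
    refine csSup_le (hAne μ₂ h₂) fun z₂ hz₂ => ?_
    rw [le_div_iff₀ hb']
    have hk := key z₁ hz₁ z₂ hz₂
    nlinarith
  have h1 : Vjo vhat μ₁ ≤ (Vjo vhat (a • μ₁ + b • μ₂) - b * Vjo vhat μ₂) / a := by
    rw [hVjo]
    refine csSup_le (hAne μ₁ h₁) fun z₁ hz₁ => ?_
    rw [le_div_iff₀ ha']
    have h := h2 z₁ hz₁
    rw [le_div_iff₀ hb'] at h
    nlinarith
  rw [le_div_iff₀ ha'] at h1
  nlinarith
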